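/- Every system R with impermanent-strong failure detectors can be converted to a system R' with strong failure detectors, while preserving accuracy properties (if R satisfies weak accuracy then so does R', and if R satisfies strong accuracy then so does R'). In particular, the conversion that always outputs the union of all previously suspected processes accomplishes this. -/

import Mathlib

/-! # Model: asynchronous message-passing systems with crash failures and
failure detectors (Halpern–Ricciardi). -/

/-- Events at a process: `send q msg`, `recv q msg` (peer `q`), `crash`,
`doAct α`, `initAct α`, and failure-detector events `suspect x` with report `x : FD`. -/
inductive Event (n : ℕ) (Msg Act FD : Type) where
  | send    : Fin n → Msg → Event n Msg Act FD
  | recv    : Fin n → Msg → Event n Msg Act FD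
  | crash   : Event n Msg Act FD
  | doAct   : Act → Event n Msg Act FD
  | initAct : Act → Event n Msg Act FD
  | suspect : FD → Event n Msg Act FD
  deriving DecidableEq

/-- A history is a finite sequence of events (oldest first). -/
abbrev History (n : ℕ) (Msg Act FD : Type) := List (Event n Msg Act FD)

/-- A run assigns to each time a cut, i.e. a history for each process. -/
abbrev Run (n : ℕ) (Msg Act FD : Type) := ℕ → Fin n → History n Msg Act FD

/-- Runs with standard failure-detector reports (sets of suspected processes). -/
abbrev StdRun (n : ℕ) (Msg Act : Type) := Run n Msg Act (Finset (Fin n))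

/-- Runs with generalized failure-detector reports `(S, k)`. -/
abbrev GenRun (n : ℕ) (Msg Act : Type) := Run n Msg Act (Finset (Fin n) × ℕ)

section Model

variable {n : ℕ} {Msg Act FD FD' : Type}
variable [DecidableEq Msg] [DecidableEq Act] [DecidableEq FD] [DecidableEq FD']

/-- Conditions R1–R5 on runs (R5 is fairness of communication). -/
def IsRun (r : Run n Msg Act FD) : Prop :=
  (∀ p, r 0 p = []) ∧
  (∀ p m, r (m+1) p = r m p ∨ ∃ e, r (m+1) p = r m p ++ [e]) ∧
  (∀ p q msg m, Event.recv p msg ∈ r m q → Event.send q msg ∈ r m p) ∧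
  (∀ p m, Event.crash ∈ r m p → ∃ h, r m p = h ++ [Event.crash]) ∧
  (∀ p q msg,
      (∀ N, ∃ m, N ≤ (r m p).count (Event.send q msg)) →
      (∃ m, Event.crash ∈ r m q) ∨
        (∀ N, ∃ m, N ≤ (r m q).count (Event.recv p msg)))

/-- Process `q` is faulty in run `r` iff `crash` is in `q`'s history. -/
def Faulty (r : Run n Msg Act FD) (q : Fin n) : Prop := ∃ m, Event.crash ∈ r m q

open Classical in
/-- `F(r)`: the set of faulty processes of run `r`. -/
noncomputable def faultySet (r : Run n Msg Act FD) : Finset (Fin n) :=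
  Finset.univ.filter (fun q => Faulty r q)

/-- Communication is reliable in `r`: every message sent by `p` to a process `q`
that never crashes is eventually received by `q` (count-wise). -/
def ReliableComm (r : Run n Msg Act FD) : Prop :=
  ∀ p q msg, ¬ Faulty r q →
    ∀ m, ∃ m', (r m p).count (Event.send q msg) ≤ (r m' q).count (Event.recv p msg)

/-- No failure-detector events occur in `r`. -/
def NoFDEvents (r : Run n Msg Act FD) : Prop :=
  ∀ p m x, Event.suspect x ∉ r m p

/-! ## Standard failure detectors -/

/-- `Suspects_p(r,m)`: the report of the most recent failure-detector event in
`r_p(m)`, and `∅` if there is none. -/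
def Suspects (r : StdRun n Msg Act) (p : Fin n) (m : ℕ) : Finset (Fin n) :=
  (r m p).foldl (fun acc e => match e with | Event.suspect S => S | _ => acc) ∅

/-- Strong accuracy: no process is suspected before it crashes. -/
def StrongAccuracyRun (r : StdRun n Msg Act) : Prop :=
  ∀ p q m, q ∈ Suspects r p m → Event.crash ∈ r m q

/-- Weak accuracy: if some process is correct, some correct process is never suspected. -/
def WeakAccuracyRun (r : StdRun n Msg Act) : Prop :=
  faultySet r ≠ Finset.univ →
    ∃ q, ¬ Faulty r q ∧ ∀ p m, q ∉ Suspects r p m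

/-- Strong completeness: every faulty process is eventually permanently suspected
by every correct process. -/
def StrongCompletenessRun (r : StdRun n Msg Act) : Prop :=
  ∀ p q, Faulty r q → ¬ Faulty r p → ∃ m, ∀ m' ≥ m, q ∈ Suspects r p m'

/-- Weak completeness. -/
def WeakCompletenessRun (r : StdRun n Msg Act) : Prop :=
  ∀ q, Faulty r q → faultySet r ≠ Finset.univ →
    ∃ p, ¬ Faulty r p ∧ ∃ m, ∀ m' ≥ m, q ∈ Suspects r p m'

/-- Impermanent strong completeness. -/
def ImpStrongCompletenessRun (r : StdRun n Msg Act) : Prop :=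
  ∀ p q, Faulty r q → ¬ Faulty r p → ∃ m, q ∈ Suspects r p m

/-- Impermanent weak completeness. -/
def ImpWeakCompletenessRun (r : StdRun n Msg Act) : Prop :=
  ∀ q, Faulty r q → faultySet r ≠ Finset.univ →
    ∃ p m, ¬ Faulty r p ∧ q ∈ Suspects r p m

/-! ## Generalized failure detectors -/

/-- `suspect_p(S,k)` is a `t`-useful failure-detector event for run `r`:
`F(r) ⊆ S`, `n - |S| > min(t,n-1) - k` (stated additively to avoid truncated
subtraction), and `k ≤ |S|`. -/
def TUsefulEvent (t : ℕ) (r : GenRun n Msg Act) (S : Finset (Fin n)) (k : ℕ) : Prop :=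
  faultySet r ⊆ S ∧ n + k > S.card + min t (n - 1) ∧ k ≤ S.card

/-- Generalized strong accuracy. -/
def GenAccuracyRun (r : GenRun n Msg Act) : Prop :=
  ∀ p m (S : Finset (Fin n)) k, Event.suspect (S, k) ∈ r m p →
    ∃ S' ⊆ S, S'.card = k ∧ ∀ q ∈ S', Event.crash ∈ r m q

/-- Generalized impermanent strong completeness (w.r.t. bound `t`). -/
def GenCompletenessRun (t : ℕ) (r : GenRun n Msg Act) : Prop :=
  ∀ p, ¬ Faulty r p →
    ∃ m, ∃ S : Finset (Fin n), ∃ k, Event.suspect (S, k) ∈ r m p ∧ TUsefulEvent t r S k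

/-! ## Protocols, contexts, and generated systems -/

/-- A joint protocol: for each process, a function from finite histories to actions
(identified with the corresponding events). -/
abbrev JointProtocol (n : ℕ) (Msg Act FD : Type) :=
  Fin n → History n Msg Act FD → Event n Msg Act FD

/-- Protocol events: sends and internal (`do`/`init`) events; receives, crashes
and failure-detector events are due to the environment. -/
def IsProtocolEvent : Event n Msg Act FD → Prop
  | Event.send _ _  => True
  | Event.doAct _   => True
  | Event.initAct _ => True
  | _ => False

/-- A run is consistent with a joint protocol. -/
def Consistent (P : JointProtocol n Msg Act FD) (r : Run n Msg Act FD) : Prop :=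
  ∀ p m e, r (m+1) p = r m p ++ [e] → IsProtocolEvent e → e = P p (r m p)

/-- `init_p(α)` may appear only in `p = owner α`'s history and at most once per run. -/
def InitOK (ow : Act → Fin n) (r : Run n Msg Act FD) : Prop :=
  ∀ p m α, Event.initAct α ∈ r m p →
    ow α = p ∧ (r m p).count (Event.initAct α) ≤ 1

/-- The system generated by joint protocol `P` in context `C` (a context is
identified with the set of runs satisfying its constraints): all runs satisfying
R1–R5, the `init` constraints, and the constraints of the context, that are
consistent with the protocol. -/
def Generated (ow : Act → Fin n) (C : Set (Run n Msg Act FD))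
    (P : JointProtocol n Msg Act FD) : Set (Run n Msg Act FD) :=
  {r | IsRun r ∧ InitOK ow r ∧ r ∈ C ∧ Consistent P r}

/-! ## UDC and nUDC -/

/-- UDC of action `α` owned by `p` in system `R` (conditions DC1–DC3). -/
def UDCof (R : Set (Run n Msg Act FD)) (p : Fin n) (α : Act) : Prop :=
  (∀ r ∈ R, ∀ m, Event.initAct α ∈ r m p →
      ∃ m' ≥ m, Event.doAct α ∈ r m' p ∨ Event.crash ∈ r m' p) ∧
  (∀ r ∈ R, ∀ q₁ q₂ m, Event.doAct α ∈ r m q₁ →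
      ∃ m' ≥ m, Event.doAct α ∈ r m' q₂ ∨ Event.crash ∈ r m' q₂) ∧
  (∀ r ∈ R, ∀ q m, Event.doAct α ∈ r m q → Event.initAct α ∈ r m p)

/-- nUDC of action `α` owned by `p` (conditions DC1, DC2', DC3). -/
def NUDCof (R : Set (Run n Msg Act FD)) (p : Fin n) (α : Act) : Prop :=
  (∀ r ∈ R, ∀ m, Event.initAct α ∈ r m p →
      ∃ m' ≥ m, Event.doAct α ∈ r m' p ∨ Event.crash ∈ r m' p) ∧
  (∀ r ∈ R, ∀ q₁ q₂ m, Event.doAct α ∈ r m q₁ →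
      ∃ m' ≥ m, Event.doAct α ∈ r m' q₂ ∨ Event.crash ∈ r m' q₂ ∨
        Event.crash ∈ r m' q₁) ∧
  (∀ r ∈ R, ∀ q m, Event.doAct α ∈ r m q → Event.initAct α ∈ r m p)

/-- `R` attains UDC: UDC of every coordination action. -/
def AttainsUDC (ow : Act → Fin n) (R : Set (Run n Msg Act FD)) : Prop :=
  ∀ α, UDCof R (ow α) α

/-- `R` attains nUDC: nUDC of every coordination action. -/
def AttainsNUDC (ow : Act → Fin n) (R : Set (Run n Msg Act FD)) : Prop :=
  ∀ α, NUDCof R (ow α) α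

/-! ## Conversions between systems -/

/-- Re-tag a non-failure-detector event; failure-detector events are dropped. -/
def mapNonFD : Event n Msg Act FD → Option (Event n Msg Act FD')
  | Event.send q msg => some (Event.send q msg)
  | Event.recv q msg => some (Event.recv q msg)
  | Event.crash => some Event.crash
  | Event.doAct a => some (Event.doAct a)
  | Event.initAct a => some (Event.initAct a)
  | Event.suspect _ => none

/-- `f` converts system `R` to system `R'`: `R' = f '' R`, each `f r` is a run,
and all events of `r` except possibly failure-detector events appear in `f r`
in the same order as in `r` (with possibly additional events). -/
def IsConversion (f : Run n Msg Act FD → Run n Msg Act FD')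
    (R : Set (Run n Msg Act FD)) (R' : Set (Run n Msg Act FD')) : Prop :=
  R' = f '' R ∧
  ∀ r ∈ R, IsRun (f r) ∧
    ∀ p m, ∃ m',
      ((r m p).filterMap (mapNonFD (FD' := Unit))).Sublist
        ((f r m' p).filterMap (mapNonFD (FD' := Unit)))


/-- Accumulating-union transformation of a single history: each failure-detector
event is replaced by one reporting the union of all processes suspected so far. -/
def unionHist : Finset (Fin n) → History n Msg Act (Finset (Fin n)) →
    History n Msg Act (Finset (Fin n))
  | _, [] => []
  | acc, Event.suspect S :: rest => Event.suspect (acc ∪ S) :: unionHist (acc ∪ S) rest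
  | acc, e :: rest => e :: unionHist acc rest

/-- The conversion that always outputs the union of all previously suspected
processes. -/
def unionConvert (r : StdRun n Msg Act) : StdRun n Msg Act :=
  fun m p => unionHist ∅ (r m p)

/-! ## Knowledge and temporal semantics (shallow embedding) -/

/-- `(R,r,m) ⊨ K_p φ`. -/
def Knows (R : Set (Run n Msg Act FD)) (p : Fin n)
    (φ : Run n Msg Act FD → ℕ → Prop) (r : Run n Msg Act FD) (m : ℕ) : Prop :=
  ∀ r' ∈ R, ∀ m', r' m' p = r m p → φ r' m'

/-- `(R,r,m) ⊨ □φ`. -/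
def AlwaysP (φ : Run n Msg Act FD → ℕ → Prop) (r : Run n Msg Act FD) (m : ℕ) : Prop :=
  ∀ m' ≥ m, φ r m'

/-- `(R,r,m) ⊨ ◇φ`. -/
def EventuallyP (φ : Run n Msg Act FD → ℕ → Prop) (r : Run n Msg Act FD) (m : ℕ) : Prop :=
  ∃ m' ≥ m, φ r m'

/-- `φ` is stable in `R`: once true, it remains true. -/
def StableIn (R : Set (Run n Msg Act FD)) (φ : Run n Msg Act FD → ℕ → Prop) : Prop :=
  ∀ r ∈ R, ∀ m, φ r m → ∀ m' ≥ m, φ r m'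

/-- `φ` is local to `p` in `R`: at every point, `p` knows whether `φ` holds. -/
def LocalTo (R : Set (Run n Msg Act FD)) (p : Fin n)
    (φ : Run n Msg Act FD → ℕ → Prop) : Prop :=
  ∀ r ∈ R, ∀ m, Knows R p φ r m ∨ Knows R p (fun r' m' => ¬ φ r' m') r m

/-- `φ` is insensitive to failure by `q` in `R`. -/
def Insensitive (R : Set (Run n Msg Act FD)) (q : Fin n)
    (φ : Run n Msg Act FD → ℕ → Prop) : Prop :=
  ∀ r ∈ R, ∀ r' ∈ R, ∀ m m', r' m' q = r m q ++ [Event.crash] →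
    (φ r m ↔ φ r' m')

/-- Run `r'` extends the point `(r,m)`. -/
def Extends (r' r : Run n Msg Act FD) (m : ℕ) : Prop :=
  ∀ m' ≤ m, ∀ p, r' m' p = r m' p

/-! ## Conditions A1–A5 -/

/-- A1: failures are independent of other events. -/
def CondA1 (R : Set (Run n Msg Act FD)) : Prop :=
  ∀ S : Finset (Fin n),
    (∃ rS ∈ R, ∀ q ∈ S, Faulty rS q) →
    ∀ r ∈ R, ∀ m, (∀ q, q ∉ S → Event.crash ∉ r m q) →
      ∃ r' ∈ R, Extends r' r m ∧ faultySet r' = S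

/-- A2. -/
def CondA2 (R : Set (Run n Msg Act FD)) : Prop :=
  ∀ r₁ ∈ R, ∀ r₂ ∈ R, ∀ m : ℕ, faultySet r₁ = faultySet r₂ →
    (∀ q, q ∉ faultySet r₁ → r₁ m q = r₂ m q) →
    ∃ r₁' ∈ R, ∃ r₂' ∈ R, Extends r₁' r₁ m ∧ Extends r₂' r₂ m ∧
      (∀ q ∈ faultySet r₁, Event.crash ∈ r₁' (m+1) q ∧ Event.crash ∈ r₂' (m+1) q) ∧
      (∀ m' ≥ m, ∀ q, q ∉ faultySet r₁ → r₁' m' q = r₂' m' q)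

/-- A3: `K_q init_p(α)` is insensitive to failure by `q`. -/
def CondA3 (ow : Act → Fin n) (R : Set (Run n Msg Act FD)) : Prop :=
  ∀ (p q : Fin n) (α : Act), ow α = p →
    Insensitive R q
      (fun r m => Knows R q (fun r' m' => Event.initAct α ∈ r' m' p) r m)

/-- A4. -/
def CondA4 (R : Set (Run n Msg Act FD)) : Prop :=
  ∀ (φ : Run n Msg Act FD → ℕ → Prop) (p : Fin n),
    StableIn R φ → LocalTo R p φ → Insensitive R p φ →
    ∀ r ∈ R, ∀ m : ℕ, ∀ S : Finset (Fin n), S.Nonempty →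
      (∀ q ∈ S, ¬ Knows R q φ r m) →
      ∃ r' ∈ R,
        (∀ q ∈ S, r' m q = r m q) ∧
        (∀ q, q ∉ S → ∃ h, h <+: r m q ∧
          (r' m q = h ∨ (r' m q = h ++ [Event.crash] ∧ Event.crash ∈ r m q))) ∧
        ¬ φ r' m

/-- A5ₜ: every set of at most `t` processes is exactly the faulty set of some run. -/
def CondA5 (R : Set (Run n Msg Act FD)) (t : ℕ) : Prop :=
  ∀ S : Finset (Fin n), S.card ≤ t → ∃ rS ∈ R, faultySet rS = S

/-! ## The simulations R^f and R^{f'} -/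

open Classical in
/-- The set of processes that `p` knows (in `R` at `(r,m)`) to have crashed. -/
noncomputable def KCrashSet (R : Set (Run n Msg Act FD)) (r : Run n Msg Act FD)
    (m : ℕ) (p : Fin n) : Finset (Fin n) :=
  Finset.univ.filter (fun q => Knows R p (fun r' m' => Event.crash ∈ r' m' q) r m)

/-- `p`'s history in `f(r)` (conditions P1–P3): at odd times the new failure
detector reports the processes `p` knows to have crashed; at even times the
next non-failure-detector event of `r` (if any) is appended. -/
noncomputable def fHist (R : Set (Run n Msg Act FD)) (r : Run n Msg Act FD)
    (p : Fin n) : ℕ → History n Msg Act (Finset (Fin n))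
  | 0 => []
  | (m+1) =>
    if m % 2 = 0 then
      fHist R r p m ++ [Event.suspect (KCrashSet R r (m/2) p)]
    else
      fHist R r p m ++ ((r (m/2 + 1) p).drop ((r (m/2) p).length)).filterMap mapNonFD

/-- The run `f(r)`. -/
noncomputable def fRun (R : Set (Run n Msg Act FD)) (r : Run n Msg Act FD) :
    StdRun n Msg Act :=
  fun m p => fHist R r p m

/-- The system `R^f = {f(r) : r ∈ R}`. -/
noncomputable def RfSystem (R : Set (Run n Msg Act FD)) : Set (StdRun n Msg Act) :=
  fRun R '' R

open Classical in
/-- The largest `k'` such that at every point with the same local history for `p`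
as `(r,m)`, at least `k'` processes of `S` have crashed. -/
noncomputable def kMax (R : Set (Run n Msg Act FD)) (r : Run n Msg Act FD)
    (m : ℕ) (p : Fin n) (S : Finset (Fin n)) : ℕ :=
  sSup {k' : ℕ | ∀ r'' ∈ R, ∀ m'', r'' m'' p = r m p →
    k' ≤ (S.filter (fun q => Event.crash ∈ r'' m'' q)).card}

/-- `p`'s history in `f'(r)` (conditions P1, P2, P3'), relative to an enumeration
`enum` of the subsets of `Proc`. -/
noncomputable def f'Hist (R : Set (Run n Msg Act FD)) (enum : ℕ → Finset (Fin n))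
    (r : Run n Msg Act FD) (p : Fin n) : ℕ → History n Msg Act (Finset (Fin n) × ℕ)
  | 0 => []
  | (m+1) =>
    if m % 2 = 0 then
      f'Hist R enum r p m ++
        [Event.suspect (enum ((r (m/2 + 1) p).length % 2 ^ n),
          kMax R r (m/2) p (enum ((r (m/2 + 1) p).length % 2 ^ n)))]
    else
      f'Hist R enum r p m ++ ((r (m/2 + 1) p).drop ((r (m/2) p).length)).filterMap mapNonFD

/-- The run `f'(r)`. -/
noncomputable def f'Run (R : Set (Run n Msg Act FD)) (enum : ℕ → Finset (Fin n))
    (r : Run n Msg Act FD) : GenRun n Msg Act :=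
  fun m p => f'Hist R enum r p m

/-- The system `R^{f'} = {f'(r) : r ∈ R}`. -/
noncomputable def Rf'System (R : Set (Run n Msg Act FD)) (enum : ℕ → Finset (Fin n)) :
    Set (GenRun n Msg Act) :=
  f'Run R enum '' R

/-- Infinitely many `init` events appear in `r`. -/
def InfInits (r : Run n Msg Act FD) : Prop :=
  ∀ N, ∃ m, N ≤ ∑ p, (r m p).countP (fun e => match e with | Event.initAct _ => true | _ => false)

end Model

namespace UCProof

variable {n : ℕ} {Msg Act : Type} [DecidableEq Msg] [DecidableEq Act]

/-- The "last suspect report, default `i`" fold. -/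
def lastS (i : Finset (Fin n)) (h : History n Msg Act (Finset (Fin n))) : Finset (Fin n) :=
  h.foldl (fun acc e => match e with | Event.suspect S => S | _ => acc) i

lemma suspects_eq (r : StdRun n Msg Act) (p : Fin n) (m : ℕ) :
    Suspects r p m = lastS ∅ (r m p) := rfl

lemma lastS_append (i : Finset (Fin n)) (h₁ h₂ : History n Msg Act (Finset (Fin n))) :
    lastS i (h₁ ++ h₂) = lastS (lastS i h₁) h₂ := List.foldl_append ..

lemma lastS_snoc_suspect (i S : Finset (Fin n)) (h : History n Msg Act (Finset (Fin n))) :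
    lastS i (h ++ [Event.suspect S]) = S := by
  rw [lastS_append]; rfl

lemma mem_lastS {q : Fin n} :
    ∀ (h : History n Msg Act (Finset (Fin n))) (i : Finset (Fin n)),
      q ∈ lastS i h → q ∈ i ∨ ∃ S, Event.suspect S ∈ h ∧ q ∈ S := by
  intro h
  induction h with
  | nil => intro i hq; exact Or.inl hq
  | cons e t ih =>
    intro i hq
    cases e
    case suspect S =>
      rcases ih S hq with h1 | ⟨S', hS', hq'⟩
      · exact Or.inr ⟨S, List.mem_cons_self .., h1⟩
      · exact Or.inr ⟨S', List.mem_cons_of_mem _ hS', hq'⟩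
    all_goals
      rcases ih i hq with h1 | ⟨S', hS', hq'⟩
    all_goals first
      | exact Or.inl h1
      | exact Or.inr ⟨S', List.mem_cons_of_mem _ hS', hq'⟩

/-- The accumulated union of all suspect reports. -/
def ua (acc : Finset (Fin n)) (h : History n Msg Act (Finset (Fin n))) : Finset (Fin n) :=
  h.foldl (fun a e => match e with | Event.suspect S => a ∪ S | _ => a) acc

lemma unionHist_append :
    ∀ (h₁ h₂ : History n Msg Act (Finset (Fin n))) (acc : Finset (Fin n)),
      unionHist acc (h₁ ++ h₂) = unionHist acc h₁ ++ unionHist (ua acc h₁) h₂ := by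
  intro h₁
  induction h₁ with
  | nil => intro h₂ acc; rfl
  | cons e t ih =>
    intro h₂ acc
    cases e <;>
      simp only [List.cons_append, unionHist, List.append_eq, ih] <;> rfl

lemma count_unionHist (e : Event n Msg Act (Finset (Fin n)))
    (he : ∀ S, e ≠ Event.suspect S) :
    ∀ (h : History n Msg Act (Finset (Fin n))) (acc : Finset (Fin n)),
      (unionHist acc h).count e = h.count e := by
  intro h
  induction h with
  | nil => intro acc; rfl
  | cons e' t ih =>
    intro acc
    cases e'
    case suspect S =>
      rw [unionHist, List.count_cons, List.count_cons, ih]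
      have h1 : ¬ (Event.suspect (acc ∪ S) == e) := by
        simp only [beq_iff_eq]; exact fun h => he _ h.symm
      have h2 : ¬ (Event.suspect S == e) := by
        simp only [beq_iff_eq]; exact fun h => he _ h.symm
      simp [h1, h2]
    all_goals
      rw [unionHist, List.count_cons, List.count_cons, ih]
    all_goals exact fun _ h => by cases h

lemma mem_unionHist (e : Event n Msg Act (Finset (Fin n)))
    (he : ∀ S, e ≠ Event.suspect S)
    (h : History n Msg Act (Finset (Fin n))) (acc : Finset (Fin n)) :
    e ∈ unionHist acc h ↔ e ∈ h := by
  rw [← List.count_pos_iff, ← List.count_pos_iff, count_unionHist e he]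

lemma filterMap_unionHist :
    ∀ (h : History n Msg Act (Finset (Fin n))) (acc : Finset (Fin n)),
      (unionHist acc h).filterMap (mapNonFD (FD' := Unit)) =
        h.filterMap (mapNonFD (FD' := Unit)) := by
  intro h
  induction h with
  | nil => intro acc; rfl
  | cons e t ih =>
    intro acc
    cases e <;> simp only [unionHist, List.filterMap_cons, mapNonFD, ih]

lemma lastS_unionHist_noSusp :
    ∀ (h : History n Msg Act (Finset (Fin n))) (acc i : Finset (Fin n)),
      (∀ S, Event.suspect S ∉ h) → lastS i (unionHist acc h) = i := by
  intro h
  induction h with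
  | nil => intro acc i _; rfl
  | cons e t ih =>
    intro acc i hn
    cases e
    case suspect S => exact absurd (List.mem_cons_self ..) (hn S)
    all_goals
      exact ih acc i (fun S hS => hn S (List.mem_cons_of_mem _ hS))

lemma mem_lastS_unionHist {q : Fin n} :
    ∀ (h : History n Msg Act (Finset (Fin n))) (acc i : Finset (Fin n)),
      (∃ S, Event.suspect S ∈ h) →
      (q ∈ acc ∨ ∃ S, Event.suspect S ∈ h ∧ q ∈ S) →
      q ∈ lastS i (unionHist acc h) := by
  intro h
  induction h with
  | nil => rintro acc i ⟨S, hS⟩ _; cases hS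
  | cons e t ih =>
    intro acc i hex hq
    cases e
    case suspect T =>
      show q ∈ lastS (acc ∪ T) (unionHist (acc ∪ T) t)
      by_cases ht : ∃ S, Event.suspect S ∈ t
      · refine ih (acc ∪ T) (acc ∪ T) ht ?_
        rcases hq with hq | ⟨S, hS, hq⟩
        · exact Or.inl (Finset.mem_union_left _ hq)
        · rcases List.mem_cons.mp hS with h1 | h1
          · cases h1
            exact Or.inl (Finset.mem_union_right _ hq)
          · exact Or.inr ⟨S, h1, hq⟩
      · rw [lastS_unionHist_noSusp t (acc ∪ T) _ (fun S hS => ht ⟨S, hS⟩)]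
        rcases hq with hq | ⟨S, hS, hq⟩
        · exact Finset.mem_union_left _ hq
        · rcases List.mem_cons.mp hS with h1 | h1
          · cases h1; exact Finset.mem_union_right _ hq
          · exact absurd ⟨S, h1⟩ ht
    all_goals
      have hex' : ∃ S, Event.suspect S ∈ t := by
        rcases hex with ⟨S, hS⟩
        rcases List.mem_cons.mp hS with h1 | h1
        · cases h1
        · exact ⟨S, h1⟩
      have hq' : q ∈ acc ∨ ∃ S, Event.suspect S ∈ t ∧ q ∈ S := by
        rcases hq with hq | ⟨S, hS, hq⟩
        · exact Or.inl hq
        · rcases List.mem_cons.mp hS with h1 | h1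
          · cases h1
          · exact Or.inr ⟨S, h1, hq⟩
    all_goals exact ih acc i hex' hq'

lemma mem_lastS_unionHist' {q : Fin n} :
    ∀ (h : History n Msg Act (Finset (Fin n))) (acc i : Finset (Fin n)),
      q ∈ lastS i (unionHist acc h) →
      q ∈ i ∨ q ∈ acc ∨ ∃ S, Event.suspect S ∈ h ∧ q ∈ S := by
  intro h
  induction h with
  | nil => intro acc i hq; exact Or.inl hq
  | cons e t ih =>
    intro acc i hq
    cases e
    case suspect T =>
      have hq' : q ∈ lastS (acc ∪ T) (unionHist (acc ∪ T) t) := hq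
      rcases ih (acc ∪ T) (acc ∪ T) hq' with h1 | h1 | ⟨S, hS, hqS⟩
      · rcases Finset.mem_union.mp h1 with h2 | h2
        · exact Or.inr (Or.inl h2)
        · exact Or.inr (Or.inr ⟨T, List.mem_cons_self .., h2⟩)
      · rcases Finset.mem_union.mp h1 with h2 | h2
        · exact Or.inr (Or.inl h2)
        · exact Or.inr (Or.inr ⟨T, List.mem_cons_self .., h2⟩)
      · exact Or.inr (Or.inr ⟨S, List.mem_cons_of_mem _ hS, hqS⟩)
    all_goals
      rcases ih acc i hq with h1 | h1 | ⟨S, hS, hqS⟩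
    all_goals first
      | exact Or.inl h1
      | exact Or.inr (Or.inl h1)
      | exact Or.inr (Or.inr ⟨S, List.mem_cons_of_mem _ hS, hqS⟩)

/-! ### Run-level lemmas -/

lemma run_prefix {r : StdRun n Msg Act} (hr : IsRun r) (p : Fin n) :
    ∀ {m m' : ℕ}, m ≤ m' → r m p <+: r m' p := by
  intro m m' hle
  induction m', hle using Nat.le_induction with
  | base => exact List.prefix_refl _
  | succ m' _ ih =>
    rcases hr.2.1 p m' with h1 | ⟨e, h1⟩
    · rw [h1]; exact ih
    · rw [h1]; exact ih.trans (List.prefix_append _ _)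

lemma last_event {r : StdRun n Msg Act} (hr : IsRun r) (p : Fin n) :
    ∀ (m : ℕ) (e : Event n Msg Act (Finset (Fin n))), e ∈ r m p →
      ∃ m₀ ≤ m, ∃ h, r m₀ p = h ++ [e] := by
  intro m
  induction m with
  | zero => intro e he; rw [hr.1 p] at he; cases he
  | succ m ih =>
    intro e he
    rcases hr.2.1 p m with h1 | ⟨e', h1⟩
    · rw [h1] at he
      rcases ih e he with ⟨m₀, hm₀, h, hh⟩
      exact ⟨m₀, hm₀.trans (Nat.le_succ m), h, hh⟩
    · rw [h1] at he
      rcases List.mem_append.mp he with h2 | h2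
      · rcases ih e h2 with ⟨m₀, hm₀, h, hh⟩
        exact ⟨m₀, hm₀.trans (Nat.le_succ m), h, hh⟩
      · rcases List.mem_singleton.mp h2 with rfl
        exact ⟨m + 1, le_refl _, r m p, h1⟩

/-- If `q` is never suspected, then `q` belongs to no report ever issued. -/
lemma never_suspected {r : StdRun n Msg Act} (hr : IsRun r) {q : Fin n}
    (hn : ∀ p m, q ∉ Suspects r p m) :
    ∀ p m S, Event.suspect S ∈ r m p → q ∉ S := by
  intro p m S hS hq
  rcases last_event hr p m _ hS with ⟨m₀, _, h, hh⟩
  apply hn p m₀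
  rw [suspects_eq, hh, lastS_snoc_suspect]
  exact hq

lemma crash_unionConvert (r : StdRun n Msg Act) (m : ℕ) (q : Fin n) :
    Event.crash ∈ unionConvert r m q ↔ Event.crash ∈ r m q :=
  mem_unionHist _ (fun _ h => by cases h) _ _

lemma faulty_unionConvert (r : StdRun n Msg Act) (q : Fin n) :
    Faulty (unionConvert r) q ↔ Faulty r q := by
  unfold Faulty
  exact exists_congr fun m => crash_unionConvert r m q

lemma faultySet_unionConvert (r : StdRun n Msg Act) :
    faultySet (unionConvert r) = faultySet r := by
  classical
  unfold faultySet
  ext q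
  simp [faulty_unionConvert]

lemma unionHist_singleton (acc : Finset (Fin n)) (e : Event n Msg Act (Finset (Fin n))) :
    ∃ e', unionHist acc [e] = [e'] := by
  cases e <;> exact ⟨_, rfl⟩

lemma isRun_unionConvert {r : StdRun n Msg Act} (hr : IsRun r) :
    IsRun (unionConvert r) := by
  obtain ⟨h1, h2, h3, h4, h5⟩ := hr
  refine ⟨?_, ?_, ?_, ?_, ?_⟩
  · intro p
    show unionHist ∅ (r 0 p) = []
    rw [h1 p]
    rfl
  · intro p m
    rcases h2 p m with h | ⟨e, h⟩
    · left
      show unionHist ∅ (r (m+1) p) = unionHist ∅ (r m p)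
      rw [h]
    · right
      rcases unionHist_singleton (ua (∅ : Finset (Fin n)) (r m p)) e with ⟨e', he'⟩
      refine ⟨e', ?_⟩
      show unionHist ∅ (r (m+1) p) = unionHist ∅ (r m p) ++ [e']
      rw [h, unionHist_append, he']
  · intro p q msg m hrecv
    have h' : Event.recv p msg ∈ r m q :=
      (mem_unionHist _ (fun _ h => by cases h) _ _).mp hrecv
    exact (mem_unionHist _ (fun _ h => by cases h) _ _).mpr
      (h3 p q msg m h')
  · intro p m hc
    have hc' : Event.crash ∈ r m p := (crash_unionConvert r m p).mp hc
    rcases h4 p m hc' with ⟨h, hh⟩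
    refine ⟨unionHist ∅ h, ?_⟩
    show unionHist ∅ (r m p) = unionHist ∅ h ++ [Event.crash]
    rw [hh, unionHist_append]
    rfl
  · intro p q msg hsend
    have key : ∀ m, (unionConvert r m p).count (Event.send q msg) =
        (r m p).count (Event.send q msg) :=
      fun m => count_unionHist _ (fun _ h => by cases h) _ _
    have key2 : ∀ m, (unionConvert r m q).count (Event.recv p msg) =
        (r m q).count (Event.recv p msg) :=
      fun m => count_unionHist _ (fun _ h => by cases h) _ _
    have := h5 p q msg (fun N => by
      rcases hsend N with ⟨m, hm⟩
      exact ⟨m, by rwa [key] at hm⟩)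
    rcases this with h | h
    · left
      rcases h with ⟨m, hm⟩
      exact ⟨m, (crash_unionConvert r m q).mpr hm⟩
    · right
      intro N
      rcases h N with ⟨m, hm⟩
      exact ⟨m, by rwa [key2]⟩

lemma strongCompleteness_unionConvert {r : StdRun n Msg Act} (hr : IsRun r)
    (hc : ImpStrongCompletenessRun r) : StrongCompletenessRun (unionConvert r) := by
  intro p q hfq hfp
  rw [faulty_unionConvert] at hfq
  rw [faulty_unionConvert] at hfp
  rcases hc p q hfq hfp with ⟨m, hm⟩
  rw [suspects_eq] at hm
  rcases mem_lastS _ _ hm with h | ⟨S, hS, hqS⟩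
  · cases h
  refine ⟨m, fun m' hm' => ?_⟩
  have hS' : Event.suspect S ∈ r m' p := (run_prefix hr p hm').subset hS
  show q ∈ lastS ∅ (unionHist ∅ (r m' p))
  exact mem_lastS_unionHist _ _ _ ⟨S, hS'⟩ (Or.inr ⟨S, hS', hqS⟩)

lemma weakAccuracy_unionConvert {r : StdRun n Msg Act} (hr : IsRun r)
    (hw : WeakAccuracyRun r) : WeakAccuracyRun (unionConvert r) := by
  intro hne
  rw [faultySet_unionConvert] at hne
  rcases hw hne with ⟨q, hfq, hns⟩
  refine ⟨q, (faulty_unionConvert r q).not.mpr hfq, fun p m hq => ?_⟩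
  rw [suspects_eq] at hq
  rcases mem_lastS_unionHist' _ _ _ hq with h | h | ⟨S, hS, hqS⟩
  · cases h
  · cases h
  · exact never_suspected hr hns p m S hS hqS

lemma strongAccuracy_unionConvert {r : StdRun n Msg Act} (hr : IsRun r)
    (hs : StrongAccuracyRun r) : StrongAccuracyRun (unionConvert r) := by
  intro p q m hq
  rw [suspects_eq] at hq
  rcases mem_lastS_unionHist' _ _ _ hq with h | h | ⟨S, hS, hqS⟩
  · cases h
  · cases h
  · rcases last_event hr p m _ hS with ⟨m₀, hm₀, h, hh⟩
    have hq₀ : q ∈ Suspects r p m₀ := by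
      rw [suspects_eq, hh, lastS_snoc_suspect]; exact hqS
    have := hs p q m₀ hq₀
    have hcm : Event.crash ∈ r m q := (run_prefix hr q hm₀).subset this
    exact (crash_unionConvert r m q).mpr hcm

lemma isConversion_unionConvert {R : Set (StdRun n Msg Act)}
    (hR : ∀ r ∈ R, IsRun r) :
    IsConversion unionConvert R (unionConvert '' R) := by
  refine ⟨rfl, fun r hr => ⟨isRun_unionConvert (hR r hr), fun p m => ?_⟩⟩
  refine ⟨m, ?_⟩
  rw [show unionConvert r m p = unionHist ∅ (r m p) from rfl, filterMap_unionHist]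

end UCProof

/-- Every system with impermanent-strong failure detectors can be
converted to one with strong failure detectors, preserving accuracy properties;
in particular the conversion `unionConvert`, which always outputs the union of
all previously suspected processes, accomplishes this. -/
theorem impermanent_strong_to_strong_conversion
    (n : ℕ) (Msg Act : Type) [DecidableEq Msg] [DecidableEq Act]
    (R : Set (StdRun n Msg Act)) (hR : ∀ r ∈ R, IsRun r)
    (hFD : ∀ r ∈ R, ImpStrongCompletenessRun r ∧ WeakAccuracyRun r) :
    (∃ (f : StdRun n Msg Act → StdRun n Msg Act) (R' : Set (StdRun n Msg Act)),
      IsConversion f R R' ∧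
      (∀ r' ∈ R', StrongCompletenessRun r') ∧
      ((∀ r ∈ R, WeakAccuracyRun r) → ∀ r' ∈ R', WeakAccuracyRun r') ∧
      ((∀ r ∈ R, StrongAccuracyRun r) → ∀ r' ∈ R', StrongAccuracyRun r')) ∧
    (IsConversion unionConvert R (unionConvert '' R) ∧
      (∀ r' ∈ unionConvert '' R, StrongCompletenessRun r') ∧
      ((∀ r ∈ R, WeakAccuracyRun r) →
        ∀ r' ∈ unionConvert '' R, WeakAccuracyRun r') ∧
      ((∀ r ∈ R, StrongAccuracyRun r) →
        ∀ r' ∈ unionConvert '' R, StrongAccuracyRun r')) := by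
  have key : IsConversion unionConvert R (unionConvert '' R) ∧
      (∀ r' ∈ unionConvert '' R, StrongCompletenessRun r') ∧
      ((∀ r ∈ R, WeakAccuracyRun r) →
        ∀ r' ∈ unionConvert '' R, WeakAccuracyRun r') ∧
      ((∀ r ∈ R, StrongAccuracyRun r) →
        ∀ r' ∈ unionConvert '' R, StrongAccuracyRun r') := by
    refine ⟨UCProof.isConversion_unionConvert hR, ?_, ?_, ?_⟩
    · rintro r' ⟨r, hr, rfl⟩
      exact UCProof.strongCompleteness_unionConvert (hR r hr) (hFD r hr).1
    · rintro hw r' ⟨r, hr, rfl⟩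
      exact UCProof.weakAccuracy_unionConvert (hR r hr) (hw r hr)
    · rintro hs r' ⟨r, hr, rfl⟩
      exact UCProof.strongAccuracy_unionConvert (hR r hr) (hs r hr)
  exact ⟨⟨unionConvert, unionConvert '' R, key⟩, key⟩
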